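/- (Lemma 8, 'child all'.) In the canonical model M(T₀,F₀), for any worlds w, u ∈ W, any datasets T, X ⊆ V, and any formula φ ∈ Φ with B^T_X φ ∈ F(w), if w ∼_X u and T ⊆ 𝒯_u, then φ ∈ F(u). -/

import Mathlib

/-- Formulas of the Dynamic Logic of Trust-Based Beliefs over data variables `V`
and atomic propositions `A`:  p | ¬φ | φ→φ | B^T_X φ | [X]φ. -/
inductive Formula (V A : Type) : Type
  | atom : A → Formula V A
  | neg  : Formula V A → Formula V A
  | imp  : Formula V A → Formula V A → Formula V A
  | bel  : Set V → Set V → Formula V A → Formula V A   -- `bel T X φ` is B^T_X φ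
  | ann  : Set V → Formula V A → Formula V A           -- `ann X φ` is [X]φ

/-- A trustworthiness model `(W, {∼ₓ}, {𝒯_w}, π)`. -/
structure TModel (V A : Type) where
  W : Type
  sim : V → W → W → Prop
  sim_equiv : ∀ x : V, Equivalence (sim x)
  trust : W → Set V
  pi : A → Set (W × Set V)

namespace TModel

variable {V A : Type} (M : TModel V A)

/-- `w ∼_X u` iff `w ∼ₓ u` for each `x ∈ X`. -/
def simSet (X : Set V) (w u : M.W) : Prop := ∀ x ∈ X, M.sim x w u

/-- The satisfaction relation `w,U ⊩ φ`. -/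
def Sat : Formula V A → M.W → Set V → Prop
  | .atom p, w, U => (w, U) ∈ M.pi p
  | .neg φ, w, U => ¬ Sat φ w U
  | .imp φ ψ, w, U => Sat φ w U → Sat ψ w U
  | .bel T X φ, w, U => ∀ w' : M.W, M.simSet (X ∪ U) w w' → T ⊆ M.trust w' → Sat φ w' U
  | .ann X φ, w, U => Sat φ w (U ∪ X)

end TModel
/-- `φ ∧ ψ`, defined through `¬` and `→` in the usual way. -/
def Formula.conj {V A : Type} (φ ψ : Formula V A) : Formula V A :=
  .neg (.imp φ (.neg ψ))

/-- `φ ↔ ψ`, defined through `¬` and `→` in the usual way. -/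
def Formula.iff {V A : Type} (φ ψ : Formula V A) : Formula V A :=
  Formula.conj (.imp φ ψ) (.imp ψ φ)

/-- Propositional tautologies in the language `Φ`: formulas true under every
assignment of truth values to formulas respecting `¬` and `→`. -/
def Tautology {V A : Type} (φ : Formula V A) : Prop :=
  ∀ v : Formula V A → Prop,
    (∀ ψ, v (.neg ψ) ↔ ¬ v ψ) →
    (∀ ψ χ, v (.imp ψ χ) ↔ (v ψ → v χ)) →
    v φ

/-- Theorems of the Dynamic Logic of Trust-Based Beliefs: `⊢ φ`. -/
inductive Prv {V A : Type} : Formula V A → Prop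
  | taut {φ : Formula V A} : Tautology φ → Prv φ
  | truth (X : Set V) (φ : Formula V A) : Prv (.imp (.bel ∅ X φ) φ)
  | distB (T X : Set V) (φ ψ : Formula V A) :
      Prv (.imp (.bel T X (.imp φ ψ)) (.imp (.bel T X φ) (.bel T X ψ)))
  | distA (X : Set V) (φ ψ : Formula V A) :
      Prv (.imp (.ann X (.imp φ ψ)) (.imp (.ann X φ) (.ann X ψ)))
  | negIntro (T X : Set V) (φ : Formula V A) :
      Prv (.imp (.neg (.bel T X φ)) (.bel ∅ X (.neg (.bel T X φ))))
  | mono {T T' X X' : Set V} (φ : Formula V A) :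
      T ⊆ T' → X ⊆ X' → Prv (.imp (.bel T X φ) (.bel T' X' φ))
  | trust (T X Y : Set V) (φ : Formula V A) : Prv (.bel T X (.imp (.bel T Y φ) φ))
  | comb (X Y : Set V) (φ : Formula V A) :
      Prv (Formula.iff (.ann X (.ann Y φ)) (.ann (X ∪ Y) φ))
  | comm (T X Y : Set V) (φ : Formula V A) :
      Prv (Formula.iff (.ann Y (.bel T X φ)) (.bel T (Y ∪ X) (.ann Y φ)))
  | dual (X : Set V) (φ : Formula V A) :
      Prv (Formula.iff (.neg (.ann X φ)) (.ann X (.neg φ)))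
  | empty (φ : Formula V A) : Prv (Formula.iff (.ann ∅ φ) φ)
  | mp {φ ψ : Formula V A} : Prv (.imp φ ψ) → Prv φ → Prv ψ
  | necB (T X : Set V) {φ : Formula V A} : Prv φ → Prv (.bel T X φ)
  | necA (X : Set V) {φ : Formula V A} : Prv φ → Prv (.ann X φ)

/-- `F ⊢ φ`: φ is derivable from theorems of the system and the set of
additional assumptions `F` using the Modus Ponens inference rule only. -/
inductive Deriv {V A : Type} (F : Set (Formula V A)) : Formula V A → Prop
  | thm {φ : Formula V A} : Prv φ → Deriv F φ
  | hyp {φ : Formula V A} : φ ∈ F → Deriv F φ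
  | mp {φ ψ : Formula V A} : Deriv F (.imp φ ψ) → Deriv F φ → Deriv F ψ

/-- A set of formulas is consistent if no formula and its negation are both derivable. -/
def Consistent {V A : Type} (F : Set (Formula V A)) : Prop :=
  ¬ ∃ φ : Formula V A, Deriv F φ ∧ Deriv F (.neg φ)

/-- A maximal consistent set: a consistent set not properly contained in any consistent set. -/
def MaxConsistent {V A : Type} (F : Set (Formula V A)) : Prop :=
  Consistent F ∧ ∀ G : Set (Formula V A), F ⊆ G → Consistent G → G = F
/-- A triple `(Xᵢ, Tᵢ, Fᵢ)` labelling one step of a canonical-model world. -/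
abbrev Triple (V A : Type) := Set V × Set V × Set (Formula V A)

/-- Condition on a node labelled `T, F` of the canonical tree: `F` is a maximal
consistent set and `B^T_Y φ → φ ∈ F` for every dataset `Y` and formula `φ`. -/
def NodeOk {V A : Type} (T : Set V) (F : Set (Formula V A)) : Prop :=
  MaxConsistent F ∧ ∀ (Y : Set V) (φ : Formula V A), Formula.imp (.bel T Y φ) φ ∈ F

/-- `T(w)`: the last dataset `Tₙ` of the world `w` (worlds are written as lists of
triples with the most recent triple first; the empty list is the root `T₀, F₀`). -/
def worldT {V A : Type} (T₀ : Set V) : List (Triple V A) → Set V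
  | [] => T₀
  | (_, T, _) :: _ => T

/-- `F(w)`: the last set of formulas `Fₙ` of the world `w`. -/
def worldF {V A : Type} (F₀ : Set (Formula V A)) : List (Triple V A) → Set (Formula V A)
  | [] => F₀
  | (_, _, F) :: _ => F

/-- Worlds of the canonical model `M(T₀,F₀)`: sequences
`T₀,F₀,X₁,T₁,F₁,…,Xₙ,Tₙ,Fₙ` such that each `Fᵢ` is a maximal consistent set with
(a) `ψ ∈ Fᵢ` whenever `B^∅_{Xᵢ} ψ ∈ F_{i-1}` (for `i > 0`), and
(b) `B^{Tᵢ}_Y φ → φ ∈ Fᵢ` for every dataset `Y` and formula `φ`. -/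
def IsWorld {V A : Type} (T₀ : Set V) (F₀ : Set (Formula V A)) :
    List (Triple V A) → Prop
  | [] => NodeOk T₀ F₀
  | (X, T, F) :: rest =>
      IsWorld T₀ F₀ rest ∧ NodeOk T F ∧
        ∀ ψ : Formula V A, Formula.bel ∅ X ψ ∈ worldF F₀ rest → ψ ∈ F

/-- `u ∼ₓ v` in the canonical model: every edge along the unique simple path in the
tree between `u` and `v` is labelled with the variable `x`; equivalently, `u` and `v`
have a common ancestor `c` such that every edge between `c` and `u` and every edge
between `c` and `v` is labelled with `x`. -/
def csim {V A : Type} (x : V) (u v : List (Triple V A)) : Prop :=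
  ∃ c d₁ d₂ : List (Triple V A),
    u = d₁ ++ c ∧ v = d₂ ++ c ∧ (∀ t ∈ d₁, x ∈ t.1) ∧ (∀ t ∈ d₂, x ∈ t.1)

section ChildAllHelpers

variable {V A : Type}

private lemma taut_K (φ ψ : Formula V A) : Prv (.imp ψ (.imp φ ψ)) :=
  Prv.taut (by intro v hn hi; simp only [hi]; tauto)

private lemma taut_I (φ : Formula V A) : Prv (.imp φ φ) :=
  Prv.taut (by intro v hn hi; simp only [hi]; tauto)

private lemma taut_S (φ χ ψ : Formula V A) :
    Prv (.imp (.imp φ (.imp χ ψ)) (.imp (.imp φ χ) (.imp φ ψ))) :=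
  Prv.taut (by intro v hn hi; simp only [hi]; tauto)

/-- Deduction theorem for `Deriv`. -/
private lemma deduction {F : Set (Formula V A)} {φ ψ : Formula V A}
    (h : Deriv (insert φ F) ψ) : Deriv F (.imp φ ψ) := by
  induction h with
  | thm h => exact Deriv.mp (Deriv.thm (taut_K _ _)) (Deriv.thm h)
  | hyp h =>
    rcases h with h | h
    · exact h ▸ Deriv.thm (taut_I _)
    · exact Deriv.mp (Deriv.thm (taut_K _ _)) (Deriv.hyp h)
  | mp _ _ ih1 ih2 => exact Deriv.mp (Deriv.mp (Deriv.thm (taut_S _ _ _)) ih1) ih2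

private lemma mcs_closed {F : Set (Formula V A)} (hF : MaxConsistent F) {φ : Formula V A}
    (h : Deriv F φ) : φ ∈ F := by
  have hins : Consistent (insert φ F) := by
    rintro ⟨χ, h1, h2⟩
    exact hF.1 ⟨χ, Deriv.mp (deduction h1) h, Deriv.mp (deduction h2) h⟩
  have := hF.2 (insert φ F) (Set.subset_insert _ _) hins
  rw [← this]; exact Set.mem_insert _ _

private lemma mcs_neg {F : Set (Formula V A)} (hF : MaxConsistent F) {φ : Formula V A}
    (h : φ ∉ F) : Formula.neg φ ∈ F := by
  have hincons : ¬ Consistent (insert φ F) := by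
    intro hc
    have := hF.2 _ (Set.subset_insert _ _) hc
    exact h (this ▸ Set.mem_insert _ _)
  rw [Consistent, not_not] at hincons
  obtain ⟨χ, h1, h2⟩ := hincons
  have t : Prv (V := V) (A := A)
      (.imp (.imp φ χ) (.imp (.imp φ (.neg χ)) (.neg φ))) :=
    Prv.taut (by intro v hn hi; simp only [hi, hn]; tauto)
  exact mcs_closed hF (Deriv.mp (Deriv.mp (Deriv.thm t) (deduction h1)) (deduction h2))

private lemma mcs_not_both {F : Set (Formula V A)} (hF : MaxConsistent F) {φ : Formula V A}
    (h1 : φ ∈ F) (h2 : Formula.neg φ ∈ F) : False :=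
  hF.1 ⟨φ, Deriv.hyp h1, Deriv.hyp h2⟩

private lemma prv_syl {p q r : Formula V A} (h1 : Prv (.imp p q)) (h2 : Prv (.imp q r)) :
    Prv (.imp p r) := by
  have t : Prv (V := V) (A := A) (.imp (.imp p q) (.imp (.imp q r) (.imp p r))) :=
    Prv.taut (by intro v hn hi; simp only [hi]; tauto)
  exact Prv.mp (Prv.mp t h1) h2

/-- from `¬p → q` infer `¬q → p`. -/
private lemma prv_cp1 {p q : Formula V A} (h : Prv (.imp (.neg p) q)) :
    Prv (.imp (.neg q) p) := by
  have t : Prv (V := V) (A := A) (.imp (.imp (.neg p) q) (.imp (.neg q) p)) :=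
    Prv.taut (by intro v hn hi; simp only [hi, hn]; tauto)
  exact Prv.mp t h

/-- from `p → ¬q` infer `q → ¬p`. -/
private lemma prv_cp2 {p q : Formula V A} (h : Prv (.imp p (.neg q))) :
    Prv (.imp q (.neg p)) := by
  have t : Prv (V := V) (A := A) (.imp (.imp p (.neg q)) (.imp q (.neg p))) :=
    Prv.taut (by intro v hn hi; simp only [hi, hn]; tauto)
  exact Prv.mp t h

/-- Positive introspection: `⊢ B^T_X φ → B^∅_X B^T_X φ`. -/
private lemma prv_four (T X : Set V) (φ : Formula V A) :
    Prv (.imp (.bel T X φ) (.bel ∅ X (.bel T X φ))) := by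
  have s1 : Prv (V := V) (A := A)
      (.imp (.neg (.bel T X φ)) (.bel ∅ X (.neg (.bel T X φ)))) := Prv.negIntro T X φ
  have s2 := prv_cp1 s1
  have s3 := Prv.necB ∅ X s2
  have s4 := Prv.mp (Prv.distB ∅ X _ _) s3
  have t1 : Prv (V := V) (A := A)
      (.imp (.bel ∅ X (.neg (.bel T X φ))) (.neg (.bel T X φ))) := Prv.truth X _
  have t2 := prv_cp2 t1
  have t3 : Prv (V := V) (A := A)
      (.imp (.neg (.bel ∅ X (.neg (.bel T X φ))))
            (.bel ∅ X (.neg (.bel ∅ X (.neg (.bel T X φ)))))) :=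
    Prv.negIntro ∅ X _
  exact prv_syl (prv_syl t2 t3) s4

/-- Propagating a belief from a child node to its parent. -/
private lemma up_step {Fp Fc : Set (Formula V A)} {T X X' : Set V} {φ : Formula V A}
    (hFp : MaxConsistent Fp) (hFc : MaxConsistent Fc)
    (ha : ∀ ψ : Formula V A, Formula.bel ∅ X' ψ ∈ Fp → ψ ∈ Fc)
    (hXX' : X ⊆ X') (hB : Formula.bel T X φ ∈ Fc) : Formula.bel T X φ ∈ Fp := by
  by_contra h
  have h1 := mcs_neg hFp h
  have h2 : Formula.bel ∅ X' (.neg (.bel T X φ)) ∈ Fp :=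
    mcs_closed hFp (Deriv.mp
      (Deriv.thm (prv_syl (Prv.negIntro T X φ) (Prv.mono _ (subset_refl _) hXX')))
      (Deriv.hyp h1))
  exact mcs_not_both hFc hB (ha _ h2)

/-- Propagating a belief from a parent node to a child. -/
private lemma down_step {Fp Fc : Set (Formula V A)} {T X X' : Set V} {φ : Formula V A}
    (hFp : MaxConsistent Fp)
    (ha : ∀ ψ : Formula V A, Formula.bel ∅ X' ψ ∈ Fp → ψ ∈ Fc)
    (hXX' : X ⊆ X') (hB : Formula.bel T X φ ∈ Fp) : Formula.bel T X φ ∈ Fc :=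
  ha _ (mcs_closed hFp (Deriv.mp
    (Deriv.thm (prv_syl (prv_four T X φ) (Prv.mono _ (subset_refl _) hXX')))
    (Deriv.hyp hB)))

private lemma isWorld_suffix {T₀ : Set V} {F₀ : Set (Formula V A)} :
    ∀ (d c : List (Triple V A)), IsWorld T₀ F₀ (d ++ c) → IsWorld T₀ F₀ c := by
  intro d
  induction d with
  | nil => exact fun c h => h
  | cons t d ih =>
    obtain ⟨X, T, F⟩ := t
    exact fun c h => ih c h.1

private lemma nodeOk_world {T₀ : Set V} {F₀ : Set (Formula V A)}
    {l : List (Triple V A)} (h : IsWorld T₀ F₀ l) :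
    NodeOk (worldT T₀ l) (worldF F₀ l) := by
  cases l with
  | nil => exact h
  | cons t rest => obtain ⟨X, T, F⟩ := t; exact h.2.1

private lemma mcs_world {T₀ : Set V} {F₀ : Set (Formula V A)}
    {l : List (Triple V A)} (h : IsWorld T₀ F₀ l) : MaxConsistent (worldF F₀ l) :=
  (nodeOk_world h).1

private lemma up_many {T₀ : Set V} {F₀ : Set (Formula V A)} {T X : Set V} {φ : Formula V A} :
    ∀ (d c : List (Triple V A)), IsWorld T₀ F₀ (d ++ c) → (∀ t ∈ d, X ⊆ t.1) →
      Formula.bel T X φ ∈ worldF F₀ (d ++ c) → Formula.bel T X φ ∈ worldF F₀ c := by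
  intro d
  induction d with
  | nil => exact fun c _ _ hB => hB
  | cons t d ih =>
    obtain ⟨X', T', Fc⟩ := t
    intro c h hl hB
    have hrest : IsWorld T₀ F₀ (d ++ c) := h.1
    exact ih c hrest (fun t ht => hl t (List.mem_cons_of_mem _ ht))
      (up_step (mcs_world hrest) h.2.1.1 h.2.2
        (hl _ List.mem_cons_self) hB)

private lemma down_many {T₀ : Set V} {F₀ : Set (Formula V A)} {T X : Set V} {φ : Formula V A} :
    ∀ (d c : List (Triple V A)), IsWorld T₀ F₀ (d ++ c) → (∀ t ∈ d, X ⊆ t.1) →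
      Formula.bel T X φ ∈ worldF F₀ c → Formula.bel T X φ ∈ worldF F₀ (d ++ c) := by
  intro d
  induction d with
  | nil => exact fun c _ _ hB => hB
  | cons t d ih =>
    obtain ⟨X', T', Fc⟩ := t
    intro c h hl hB
    have hrest : IsWorld T₀ F₀ (d ++ c) := h.1
    exact down_step (mcs_world hrest) h.2.2 (hl _ List.mem_cons_self)
      (ih c hrest (fun t ht => hl t (List.mem_cons_of_mem _ ht)) hB)

end ChildAllHelpers

section ChildAllHelpers2

variable {V A : Type}

private lemma suffix_of_le {α : Type _} {c cx w : List α} (h1 : c <:+ w) (h2 : cx <:+ w)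
    (h : cx.length ≤ c.length) : cx <:+ c := by
  rcases List.suffix_or_suffix_of_suffix h2 h1 with h' | h'
  · exact h'
  · rw [h'.eq_of_length (le_antisymm h'.length_le h)]

private lemma label_trans {x : V} {w c cx d e g : List (Triple V A)}
    (hw : w = d ++ c) (hww : w = e ++ cx) (hc : c = g ++ cx)
    (hlab : ∀ t ∈ e, x ∈ t.1) : ∀ t ∈ d, x ∈ t.1 := by
  have he : d ++ g = e :=
    List.append_cancel_right (by rw [List.append_assoc, ← hc, ← hw, hww])
  exact fun t ht => hlab t (he ▸ List.mem_append_left _ ht)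

end ChildAllHelpers2

/-- Lemma 8 ("child all"): in the canonical model, for any worlds `w, u` and any
formula `B^T_X φ ∈ F(w)`, if `w ∼_X u` and `T ⊆ 𝒯_u`, then `φ ∈ F(u)`. -/
theorem child_all {V A : Type} (T₀ : Set V) (F₀ : Set (Formula V A))
    (w u : List (Triple V A)) (hw : IsWorld T₀ F₀ w) (hu : IsWorld T₀ F₀ u)
    (T X : Set V) (φ : Formula V A)
    (hB : Formula.bel T X φ ∈ worldF F₀ w)
    (hsim : ∀ x ∈ X, csim x w u) (hT : T ⊆ worldT T₀ u) :
    φ ∈ worldF F₀ u := by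
  obtain ⟨c, d₁, d₂, hw1, hu1, hl1, hl2⟩ :
      ∃ c d₁ d₂ : List (Triple V A), w = d₁ ++ c ∧ u = d₂ ++ c ∧
        (∀ t ∈ d₁, X ⊆ t.1) ∧ (∀ t ∈ d₂, X ⊆ t.1) := by
    by_cases hX : X = ∅
    · exact ⟨[], w, u, (List.append_nil _).symm, (List.append_nil _).symm,
        fun t _ => hX ▸ Set.empty_subset _, fun t _ => hX ▸ Set.empty_subset _⟩
    · obtain ⟨x₀, hx₀⟩ := Set.nonempty_iff_ne_empty.mpr hX
      set S : Set ℕ := {n | ∃ x ∈ X, ∃ c d₁ d₂ : List (Triple V A),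
        w = d₁ ++ c ∧ u = d₂ ++ c ∧ (∀ t ∈ d₁, x ∈ t.1) ∧ (∀ t ∈ d₂, x ∈ t.1) ∧
        c.length = n} with hS
      have hSne : S.Nonempty := by
        obtain ⟨c, d₁, d₂, h1, h2, h3, h4⟩ := hsim x₀ hx₀
        exact ⟨c.length, x₀, hx₀, c, d₁, d₂, h1, h2, h3, h4, rfl⟩
      have hSbdd : BddAbove S := by
        refine ⟨w.length, ?_⟩
        rintro n ⟨x, hx, c, d₁, d₂, h1, h2, -, -, rfl⟩
        exact List.IsSuffix.length_le ⟨d₁, h1.symm⟩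
      obtain ⟨x₁, hx₁, c, d₁, d₂, h1, h2, h3, h4, hlen⟩ := Nat.sSup_mem hSne hSbdd
      refine ⟨c, d₁, d₂, h1, h2, ?_, ?_⟩
      · intro t ht x hx
        obtain ⟨cx, e₁, e₂, g1, g2, g3, g4⟩ := hsim x hx
        have hmem : cx.length ∈ S := ⟨x, hx, cx, e₁, e₂, g1, g2, g3, g4, rfl⟩
        have hle : cx.length ≤ c.length := by rw [hlen]; exact le_csSup hSbdd hmem
        obtain ⟨g, hg⟩ := suffix_of_le ⟨d₁, h1.symm⟩ ⟨e₁, g1.symm⟩ hle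
        exact label_trans h1 g1 hg.symm g3 t ht
      · intro t ht x hx
        obtain ⟨cx, e₁, e₂, g1, g2, g3, g4⟩ := hsim x hx
        have hmem : cx.length ∈ S := ⟨x, hx, cx, e₁, e₂, g1, g2, g3, g4, rfl⟩
        have hle : cx.length ≤ c.length := by rw [hlen]; exact le_csSup hSbdd hmem
        obtain ⟨g, hg⟩ := suffix_of_le ⟨d₂, h2.symm⟩ ⟨e₂, g2.symm⟩ hle
        exact label_trans h2 g2 hg.symm g4 t ht
  have hwc : IsWorld T₀ F₀ (d₁ ++ c) := hw1 ▸ hw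
  have huc : IsWorld T₀ F₀ (d₂ ++ c) := hu1 ▸ hu
  have hBc : Formula.bel T X φ ∈ worldF F₀ c :=
    up_many d₁ c hwc hl1 (hw1 ▸ hB)
  have hBu : Formula.bel T X φ ∈ worldF F₀ u := by
    rw [hu1]; exact down_many d₂ c huc hl2 hBc
  have hnode := (nodeOk_world hu).2 X φ
  have h5 : Formula.bel (worldT T₀ u) X φ ∈ worldF F₀ u :=
    mcs_closed (mcs_world hu)
      (Deriv.mp (Deriv.thm (Prv.mono φ hT (subset_refl X))) (Deriv.hyp hBu))
  exact mcs_closed (mcs_world hu) (Deriv.mp (Deriv.hyp hnode) (Deriv.hyp h5))
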